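/- Let C be a neighbour-transitive code in K(n,k) with minimum distance δ ≥ 3 and let α ∈ C. Then the stabiliser Aut(C)_α acts transitively on the set Γ₁(α) of neighbours of α, hence acts k-homogeneously on Ω \ α (equivalently (n−2k)-homogeneously on Ω \ α, a set of size n−k). -/

import Mathlib

open Finset

abbrev KVert (Ω : Type*) [DecidableEq Ω] (k : ℕ) := {s : Finset Ω // s.card = k}

def kneser (Ω : Type*) [DecidableEq Ω] (k : ℕ) : SimpleGraph (KVert Ω k) where
  Adj a b := a ≠ b ∧ Disjoint a.1 b.1
  symm := ⟨fun a b h => ⟨h.1.symm, h.2.symm⟩⟩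
  loopless := ⟨fun a h => h.1 rfl⟩

/-- The action of a permutation of `Ω` on the vertices of the Kneser graph. -/
def permV {Ω : Type*} [DecidableEq Ω] {k : ℕ} (g : Equiv.Perm Ω) (a : KVert Ω k) : KVert Ω k :=
  ⟨a.1.map g.toEmbedding, by simp [a.2]⟩

/-- The setwise stabiliser of a code `C` inside `Sym(Ω)`. -/
def autC {Ω : Type*} [DecidableEq Ω] {k : ℕ} (C : Set (KVert Ω k)) : Set (Equiv.Perm Ω) :=
  {g | (permV g) '' C = C}

/-- `nbrs C i` is `Cᵢ`, the set of vertices at distance exactly `i` from the code `C`. -/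
def nbrs {Ω : Type*} [Fintype Ω] [DecidableEq Ω] {k : ℕ} (C : Set (KVert Ω k)) (i : ℕ) :
    Set (KVert Ω k) :=
  {γ | (∃ α ∈ C, (kneser Ω k).dist α γ = i) ∧ ∀ β ∈ C, i ≤ (kneser Ω k).dist β γ}

/-- `G` acts transitively on the set of vertices `S`. -/
def transOn {Ω : Type*} [DecidableEq Ω] {k : ℕ} (G : Set (Equiv.Perm Ω))
    (S : Set (KVert Ω k)) : Prop :=
  ∀ x ∈ S, ∀ y ∈ S, ∃ g ∈ G, permV g x = y

section Aux

variable {Ω : Type*} [Fintype Ω] [DecidableEq Ω] {k : ℕ}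

lemma permV_injective (g : Equiv.Perm Ω) : Function.Injective (permV (Ω := Ω) (k := k) g) := by
  intro a b h
  have h' : a.1.map g.toEmbedding = b.1.map g.toEmbedding := congrArg Subtype.val h
  exact Subtype.ext (Finset.map_injective g.toEmbedding h')

lemma permV_adj (g : Equiv.Perm Ω) {a b : KVert Ω k} (h : (kneser Ω k).Adj a b) :
    (kneser Ω k).Adj (permV g a) (permV g b) := by
  refine ⟨fun he => h.1 (permV_injective g he), ?_⟩
  exact (Finset.disjoint_map g.toEmbedding).mpr h.2

lemma ne_of_disjoint {a b : KVert Ω k} (hk : 1 ≤ k) (h : Disjoint a.1 b.1) : a ≠ b := by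
  intro he
  subst he
  have h2 := a.2
  rw [disjoint_self.mp h] at h2
  simp at h2
  omega

lemma kneser_reachable (hk : 1 ≤ k) (hkn : 2 * k + 1 ≤ Fintype.card Ω)
    (a b : KVert Ω k) : (kneser Ω k).Reachable a b := by
  suffices H : ∀ m (a : KVert Ω k), (b.1 \ a.1).card = m → (kneser Ω k).Reachable a b from
    H _ a rfl
  intro m
  induction m with
  | zero =>
    intro a hm
    have hsub : b.1 ⊆ a.1 := by
      rw [← Finset.sdiff_eq_empty_iff_subset]
      exact Finset.card_eq_zero.mp hm
    have : b.1 = a.1 := Finset.eq_of_subset_of_card_le hsub (by rw [a.2, b.2])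
    have hab : a = b := Subtype.ext this.symm
    rw [hab]
  | succ m ih =>
    intro a hm
    obtain ⟨x, hx⟩ := Finset.card_pos.mp (by omega : 0 < (b.1 \ a.1).card)
    have hxb : x ∈ b.1 := (Finset.mem_sdiff.mp hx).1
    have hxa : x ∉ a.1 := (Finset.mem_sdiff.mp hx).2
    have hcomm : (a.1 \ b.1).card = (b.1 \ a.1).card :=
      Finset.card_sdiff_comm (by rw [a.2, b.2])
    obtain ⟨y, hy⟩ := Finset.card_pos.mp (by omega : 0 < (a.1 \ b.1).card)
    have hya : y ∈ a.1 := (Finset.mem_sdiff.mp hy).1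
    have hyb : y ∉ b.1 := (Finset.mem_sdiff.mp hy).2
    have hxy : x ≠ y := fun h => hyb (h ▸ hxb)
    -- the intermediate vertex a'
    have ha'card : (insert x (a.1.erase y)).card = k := by
      rw [Finset.card_insert_of_notMem (fun h => hxa (Finset.mem_of_mem_erase h)),
        Finset.card_erase_of_mem hya, a.2]
      omega
    set a' : KVert Ω k := ⟨insert x (a.1.erase y), ha'card⟩ with ha'
    -- find a common neighbour D of a and a'
    have hins : (insert x a.1).card = k + 1 := by
      rw [Finset.card_insert_of_notMem hxa, a.2]
    have hcompl : k ≤ ((insert x a.1)ᶜ).card := by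
      rw [Finset.card_compl, hins]
      omega
    obtain ⟨D, hDsub, hDcard⟩ := Finset.exists_subset_card_eq hcompl
    set d : KVert Ω k := ⟨D, hDcard⟩ with hd
    have hDdisj : ∀ z ∈ D, z ∉ insert x a.1 := fun z hz =>
      Finset.mem_compl.mp (hDsub hz)
    have had : (kneser Ω k).Adj a d := by
      have hdisj : Disjoint a.1 D := Finset.disjoint_left.mpr
        (fun {z} hz hzD => hDdisj z hzD (Finset.mem_insert_of_mem hz))
      exact ⟨ne_of_disjoint hk hdisj, hdisj⟩
    have hda' : (kneser Ω k).Adj d a' := by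
      have hdisj : Disjoint D a'.1 := Finset.disjoint_left.mpr (by
        intro z hzD hza'
        rcases Finset.mem_insert.mp hza' with h | h
        · exact hDdisj z hzD (h ▸ Finset.mem_insert_self x a.1)
        · exact hDdisj z hzD (Finset.mem_insert_of_mem (Finset.mem_of_mem_erase h)))
      exact ⟨ne_of_disjoint hk hdisj, hdisj⟩
    have hsd : b.1 \ a'.1 = (b.1 \ a.1).erase x := by
      ext z
      simp only [ha', Finset.mem_sdiff, Finset.mem_insert, Finset.mem_erase, not_or, not_and]
      constructor
      · rintro ⟨hzb, hzx, hz⟩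
        have hzy : z ≠ y := fun h => hyb (h ▸ hzb)
        exact ⟨hzx, hzb, hz hzy⟩
      · rintro ⟨hzx, hzb, hza⟩
        exact ⟨hzb, hzx, fun _ => hza⟩
    have hm' : (b.1 \ a'.1).card = m := by
      rw [hsd, Finset.card_erase_of_mem hx, hm]; omega
    exact (had.reachable.trans hda'.reachable).trans (ih a' hm')

lemma unique_codeword {n : ℕ} (hcard : Fintype.card Ω = n) (hk : 2 ≤ k)
    (hkn : 2 * k + 1 ≤ n) {C : Set (KVert Ω k)}
    (hdelta : ∀ α ∈ C, ∀ β ∈ C, α ≠ β → 3 ≤ (kneser Ω k).dist α β)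
    {α β γ : KVert Ω k} (hα : α ∈ C) (hβ : β ∈ C)
    (h1 : (kneser Ω k).Adj α γ) (h2 : (kneser Ω k).Adj β γ) : β = α := by
  by_contra hne
  have h3 : 3 ≤ (kneser Ω k).dist α β := hdelta α hα β hβ (Ne.symm hne)
  have : (kneser Ω k).dist α β ≤ 2 :=
    SimpleGraph.dist_le (SimpleGraph.Walk.cons h1 (SimpleGraph.Walk.cons h2.symm
      SimpleGraph.Walk.nil))
  omega

lemma mem_nbrs_one {n : ℕ} (hcard : Fintype.card Ω = n) (hk : 2 ≤ k)
    (hkn : 2 * k + 1 ≤ n) {C : Set (KVert Ω k)}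
    (hdelta : ∀ α ∈ C, ∀ β ∈ C, α ≠ β → 3 ≤ (kneser Ω k).dist α β)
    {α γ : KVert Ω k} (hα : α ∈ C) (hadj : (kneser Ω k).Adj α γ) : γ ∈ nbrs C 1 := by
  have hd1 : (kneser Ω k).dist α γ = 1 := SimpleGraph.dist_eq_one_iff_adj.mpr hadj
  refine ⟨⟨α, hα, hd1⟩, ?_⟩
  intro β hβ
  by_cases hba : β = α
  · subst hba; omega
  have hβγ : β ≠ γ := by
    intro h
    have h3 := hdelta α hα β hβ (fun he => hadj.1 (he.trans h))
    rw [h, hd1] at h3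
    omega
  have hr : (kneser Ω k).Reachable β γ :=
    kneser_reachable (by omega) (by omega) β γ
  have : (kneser Ω k).dist β γ ≠ 0 := fun h =>
    hβγ (hr.dist_eq_zero_iff.mp h)
  omega

end Aux

/-- for a neighbour-transitive code of minimum distance at least 3,
the stabiliser of a codeword `α` is transitive on the neighbours of `α`, hence
`k`-homogeneous (equivalently `(n-2k)`-homogeneous) on `Ω \ α`. -/
theorem stmt11 {Ω : Type*} [Fintype Ω] [DecidableEq Ω] {n k : ℕ}
    (hcard : Fintype.card Ω = n) (hk : 2 ≤ k) (hkn : 2 * k + 1 ≤ n)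
    (C : Set (KVert Ω k)) (hC : C.Nontrivial)
    (h0 : transOn (autC C) C) (h1 : transOn (autC C) (nbrs C 1))
    (hdelta : ∀ α ∈ C, ∀ β ∈ C, α ≠ β → 3 ≤ (kneser Ω k).dist α β)
    (α : KVert Ω k) (hα : α ∈ C) :
    (∀ γ₁ γ₂ : KVert Ω k, (kneser Ω k).Adj α γ₁ → (kneser Ω k).Adj α γ₂ →
      ∃ g ∈ autC C, permV g α = α ∧ permV g γ₁ = γ₂) ∧
    (∀ s t : Finset Ω, s ⊆ α.1ᶜ → t ⊆ α.1ᶜ → s.card = k → t.card = k →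
      ∃ g ∈ autC C, permV g α = α ∧ s.map g.toEmbedding = t) ∧
    (∀ s t : Finset Ω, s ⊆ α.1ᶜ → t ⊆ α.1ᶜ →
      s.card = n - 2 * k → t.card = n - 2 * k →
      ∃ g ∈ autC C, permV g α = α ∧ s.map g.toEmbedding = t) := by
  -- Part 1
  have part1 : ∀ γ₁ γ₂ : KVert Ω k, (kneser Ω k).Adj α γ₁ → (kneser Ω k).Adj α γ₂ →
      ∃ g ∈ autC C, permV g α = α ∧ permV g γ₁ = γ₂ := by
    intro γ₁ γ₂ hadj1 hadj2
    obtain ⟨g, hg, hgγ⟩ := h1 γ₁ (mem_nbrs_one hcard hk hkn hdelta hα hadj1)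
      γ₂ (mem_nbrs_one hcard hk hkn hdelta hα hadj2)
    refine ⟨g, hg, ?_, hgγ⟩
    have hgα : permV g α ∈ C := by
      rw [← hg]; exact Set.mem_image_of_mem _ hα
    have hadj' : (kneser Ω k).Adj (permV g α) γ₂ := hgγ ▸ permV_adj g hadj1
    exact unique_codeword hcard hk hkn hdelta hα hgα hadj2 hadj'
  -- Part 2
  have part2 : ∀ s t : Finset Ω, s ⊆ α.1ᶜ → t ⊆ α.1ᶜ → s.card = k → t.card = k →
      ∃ g ∈ autC C, permV g α = α ∧ s.map g.toEmbedding = t := by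
    intro s t hs ht hsc htc
    set γ₁ : KVert Ω k := ⟨s, hsc⟩
    set γ₂ : KVert Ω k := ⟨t, htc⟩
    have hds : Disjoint α.1 s := Finset.disjoint_left.mpr
      (fun {z} hz hzs => Finset.mem_compl.mp (hs hzs) hz)
    have hdt : Disjoint α.1 t := Finset.disjoint_left.mpr
      (fun {z} hz hzt => Finset.mem_compl.mp (ht hzt) hz)
    obtain ⟨g, hg, hgα, hgγ⟩ := part1 γ₁ γ₂
      ⟨ne_of_disjoint (by omega) hds, hds⟩ ⟨ne_of_disjoint (by omega) hdt, hdt⟩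
    exact ⟨g, hg, hgα, congrArg Subtype.val hgγ⟩
  refine ⟨part1, part2, ?_⟩
  -- Part 3
  intro s t hs ht hsc htc
  have hcc : (α.1ᶜ).card = n - k := by
    rw [Finset.card_compl, α.2, hcard]
  have hsc' : (α.1ᶜ \ s).card = k := by
    rw [Finset.card_sdiff_of_subset hs, hcc, hsc]; omega
  have htc' : (α.1ᶜ \ t).card = k := by
    rw [Finset.card_sdiff_of_subset ht, hcc, htc]; omega
  obtain ⟨g, hg, hgα, hgmap⟩ := part2 (α.1ᶜ \ s) (α.1ᶜ \ t)
    (Finset.sdiff_subset) (Finset.sdiff_subset) hsc' htc'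
  refine ⟨g, hg, hgα, ?_⟩
  have hginj : Function.Injective g := g.injective
  have hαmap : α.1.image g = α.1 := by
    have := congrArg Subtype.val hgα
    simpa [permV, Finset.map_eq_image] using this
  have hcmap : (α.1ᶜ).image g = α.1ᶜ := by
    have hsub : (α.1ᶜ).image g ⊆ α.1ᶜ := by
      intro z hz
      obtain ⟨w, hw, rfl⟩ := Finset.mem_image.mp hz
      rw [Finset.mem_compl]
      intro hzα
      rw [← hαmap] at hzα
      obtain ⟨u, hu, huw⟩ := Finset.mem_image.mp hzα
      exact (Finset.mem_compl.mp hw) ((hginj huw) ▸ hu)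
    exact Finset.eq_of_subset_of_card_le hsub
      (by rw [Finset.card_image_of_injective _ hginj])
  have hs' : α.1ᶜ \ (α.1ᶜ \ s) = s := Finset.sdiff_sdiff_eq_self hs
  have ht' : α.1ᶜ \ (α.1ᶜ \ t) = t := Finset.sdiff_sdiff_eq_self ht
  rw [Finset.map_eq_image] at hgmap ⊢
  simp only [Equiv.coe_toEmbedding] at hgmap ⊢
  rw [← hs', Finset.image_sdiff _ _ hginj, hcmap, hgmap, ht']
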